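/- Let α > 0, let k : ℝ → ℝ be 2π-periodic with k ≥ 1, and let η₁, η₂ : ℝ → ℝ be differentiable 2π-periodic functions satisfying η₁′ = −α k η₂ and η₂′ = α k η₁ on ℝ. Define f(z) = |z|^α (η₁(θ) + i η₂(θ)) for z = ρ e^{iθ} ≠ 0. Then for every z ≠ 0, f is differentiable at z in the real sense and ‖Df(z)‖² = k(arg z) · J_f(z), where ‖Df(z)‖ denotes the operator norm of the real Fréchet derivative Df(z) and J_f(z) = det Df(z) is the Jacobian determinant. -/

import Mathlib

set_option maxHeartbeats 1600000
open Complex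

noncomputable def Tmap (a b : ℂ) : ℂ →L[ℝ] ℂ :=
  a • (ContinuousLinearMap.id ℝ ℂ) + b • (Complex.conjCLE.toContinuousLinearMap)

lemma Tmap_apply (a b h : ℂ) : Tmap a b h = a * h + b * (starRingEnd ℂ h) := by
  simp [Tmap]

lemma Tmap_det (a b : ℂ) :
    LinearMap.det ((Tmap a b : ℂ →L[ℝ] ℂ) : ℂ →ₗ[ℝ] ℂ) = ‖a‖^2 - ‖b‖^2 := by
  rw [← LinearMap.det_toMatrix Complex.basisOneI, Matrix.det_fin_two]
  simp only [LinearMap.toMatrix_apply, Complex.coe_basisOneI, ContinuousLinearMap.coe_coe]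
  simp only [Matrix.cons_val_zero, Matrix.cons_val_one, Matrix.head_cons, Tmap_apply,
    Complex.coe_basisOneI_repr]
  simp only [map_one, map_mul, Complex.conj_I, Complex.sq_norm,
    Complex.normSq_apply, mul_one, Complex.add_re, Complex.add_im, Complex.mul_re,
    Complex.mul_im, Complex.I_re, Complex.I_im, Complex.conj_re, Complex.conj_im,
    Complex.neg_re, Complex.neg_im]
  ring

lemma Tmap_norm_le (a b : ℂ) : ‖Tmap a b‖ ≤ ‖a‖ + ‖b‖ := by
  refine ContinuousLinearMap.opNorm_le_bound _ (by positivity) fun h => ?_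
  rw [Tmap_apply]
  calc ‖a * h + b * (starRingEnd ℂ h)‖ ≤ ‖a * h‖ + ‖b * (starRingEnd ℂ h)‖ := norm_add_le _ _
    _ = (‖a‖ + ‖b‖) * ‖h‖ := by simp [norm_mul]; ring

theorem opNorm_sq_eq_k_mul_jacobian (α : ℝ) (hα : 0 < α)
    (k η₁ η₂ : ℝ → ℝ)
    (hk1 : ∀ θ, 1 ≤ k θ) (hkper : Function.Periodic k (2 * Real.pi))
    (hη₁per : Function.Periodic η₁ (2 * Real.pi))
    (hη₂per : Function.Periodic η₂ (2 * Real.pi))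
    (hη₁ : ∀ θ : ℝ, HasDerivAt η₁ (-(α * k θ * η₂ θ)) θ)
    (hη₂ : ∀ θ : ℝ, HasDerivAt η₂ (α * k θ * η₁ θ) θ)
    (f : ℂ → ℂ)
    (hf : ∀ z : ℂ, f z =
      (↑(‖z‖ ^ α) : ℂ) * (↑(η₁ z.arg) + ↑(η₂ z.arg) * Complex.I)) :
    ∀ z : ℂ, z ≠ 0 → DifferentiableAt ℝ f z ∧
      ‖fderiv ℝ f z‖ ^ 2 = k z.arg * LinearMap.det (fderiv ℝ f z : ℂ →ₗ[ℝ] ℂ) := by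
  intro z₀ hz₀
  have hr : 0 < ‖z₀‖ := norm_pos_iff.mpr hz₀
  set θ := z₀.arg with hθdef
  set r := ‖z₀‖ with hrdef
  set K := k θ with hKdef
  have hK1 : 1 ≤ K := hk1 θ
  set c : ℂ := Complex.exp (-(θ : ℂ) * Complex.I) with hcdef
  have hz₀c : z₀ * c = (r : ℂ) := by
    conv_lhs => rw [← Complex.norm_mul_exp_arg_mul_I z₀]
    rw [hcdef, mul_assoc, ← Complex.exp_add, ← hθdef, ← hrdef]
    ring_nf
    simp
  have hcconj : (starRingEnd ℂ) c = Complex.exp ((θ : ℂ) * Complex.I) := by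
    rw [hcdef, ← Complex.exp_conj]
    congr 1
    simp [Complex.conj_I, Complex.conj_ofReal]
  have habsc : ‖c‖ = 1 := by
    have h1 : ‖z₀‖ * ‖c‖ = r := by rw [← norm_mul, hz₀c]; simp [hr.le]
    rw [← hrdef] at h1
    field_simp at h1
    tauto
  have hrne : (r : ℂ) ≠ 0 := by exact_mod_cast hr.ne'
  have hc_eq : c = (r : ℂ) / z₀ := by
    field_simp [hz₀c, mul_comm]
    rw [mul_comm, hz₀c]
  have hcc_eq : (starRingEnd ℂ) c = (r : ℂ) / (starRingEnd ℂ) z₀ := by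
    rw [hc_eq, map_div₀, Complex.conj_ofReal]
  have hz₀cne : (starRingEnd ℂ) z₀ ≠ 0 := by simpa using hz₀
  set G : ℂ := (η₁ θ : ℂ) + (η₂ θ : ℂ) * Complex.I with hGdef
  set a : ℂ := (α * r ^ α * (1 + K) / (2 * r) : ℝ) • (G * c) with hadef
  set b : ℂ := (α * r ^ α * (1 - K) / (2 * r) : ℝ) • (G * (starRingEnd ℂ) c) with hbdef
  have hslit : ((r : ℝ) : ℂ) ∈ Complex.slitPlane := Complex.ofReal_mem_slitPlane.2 hr
  have hlog : HasDerivAt Complex.log ((r : ℂ))⁻¹ (z₀ * c) := by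
    rw [hz₀c]; exact Complex.hasDerivAt_log hslit
  have hmul : HasDerivAt (fun z : ℂ => z * c) c z₀ := hasDerivAt_mul_const c
  have hL : HasDerivAt (fun z : ℂ => Complex.log (z * c)) ((r : ℂ)⁻¹ * c) z₀ :=
    by have := hlog.comp z₀ hmul; exact this
  set ℓ : ℂ →L[ℝ] ℂ :=
    (ContinuousLinearMap.smulRight (1 : ℂ →L[ℂ] ℂ) ((r : ℂ)⁻¹ * c)).restrictScalars ℝ with hℓdef
  have hLR : HasFDerivAt (fun z : ℂ => Complex.log (z * c)) ℓ z₀ :=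
    hL.hasFDerivAt.restrictScalars ℝ
  have hℓap : ∀ h : ℂ, ℓ h = h * ((r : ℂ)⁻¹ * c) := fun h => by
    simp [hℓdef, smul_eq_mul]
  have hlogz₀ : Complex.log (z₀ * c) = ((Real.log r : ℝ) : ℂ) := by
    rw [hz₀c, Complex.ofReal_log hr.le]
  have hsz₀ : θ = θ + (Complex.log (z₀ * c)).im := by rw [hlogz₀]; simp
  have huz₀ : α * Real.log r = α * (Complex.log (z₀ * c)).re := by rw [hlogz₀]; simp
  have hu : HasFDerivAt (fun z : ℂ => (Complex.log (z * c)).re) (Complex.reCLM.comp ℓ) z₀ :=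
    (Complex.reCLM.hasFDerivAt).comp z₀ hLR
  have hs : HasFDerivAt (fun z : ℂ => θ + (Complex.log (z * c)).im)
      (Complex.imCLM.comp ℓ) z₀ := by
    simpa using ((Complex.imCLM.hasFDerivAt).comp z₀ hLR).const_add θ
  have hA : HasFDerivAt (fun z : ℂ => η₁ (θ + (Complex.log (z * c)).im))
      ((-(α * K * η₂ θ)) • (Complex.imCLM.comp ℓ)) z₀ :=
    (hη₁ θ).comp_hasFDerivAt_of_eq z₀ hs hsz₀
  have hB : HasFDerivAt (fun z : ℂ => η₂ (θ + (Complex.log (z * c)).im))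
      ((α * K * η₁ θ) • (Complex.imCLM.comp ℓ)) z₀ :=
    (hη₂ θ).comp_hasFDerivAt_of_eq z₀ hs hsz₀
  have hA' : HasFDerivAt (fun z : ℂ => ((η₁ (θ + (Complex.log (z * c)).im) : ℝ) : ℂ))
      (Complex.ofRealCLM.comp ((-(α * K * η₂ θ)) • (Complex.imCLM.comp ℓ))) z₀ :=
    Complex.ofRealCLM.hasFDerivAt.comp z₀ hA
  have hB' : HasFDerivAt (fun z : ℂ => ((η₂ (θ + (Complex.log (z * c)).im) : ℝ) : ℂ))
      (Complex.ofRealCLM.comp ((α * K * η₁ θ) • (Complex.imCLM.comp ℓ))) z₀ :=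
    Complex.ofRealCLM.hasFDerivAt.comp z₀ hB
  have hBI : HasFDerivAt
      (fun z : ℂ => ((η₂ (θ + (Complex.log (z * c)).im) : ℝ) : ℂ) * Complex.I)
      (Complex.I • (Complex.ofRealCLM.comp ((α * K * η₁ θ) • (Complex.imCLM.comp ℓ)))) z₀ :=
    hB'.mul_const Complex.I
  have hV := hA'.add hBI
  have hαu : HasFDerivAt (fun z : ℂ => α * (Complex.log (z * c)).re)
      (α • (Complex.reCLM.comp ℓ)) z₀ := hu.const_mul α
  have hexp : HasFDerivAt (fun z : ℂ => Real.exp (α * (Complex.log (z * c)).re))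
      ((Real.exp (α * Real.log r) * α) • (Complex.reCLM.comp ℓ)) z₀ := by
    have := (Real.hasDerivAt_exp (α * Real.log r)).comp_hasFDerivAt_of_eq z₀ hαu huz₀
    rw [smul_smul] at this; exact this
  have hF := hexp.smul hV
  have hrpow : Real.exp (α * Real.log r) = r ^ α := by
    rw [Real.rpow_def_of_pos hr, mul_comm]
  have hDeq : HasFDerivAt (fun z : ℂ => Real.exp (α * (Complex.log (z * c)).re) •
      (((η₁ (θ + (Complex.log (z * c)).im) : ℝ) : ℂ) +
        ((η₂ (θ + (Complex.log (z * c)).im) : ℝ) : ℂ) * Complex.I)) (Tmap a b) z₀ := by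
    convert hF using 1
    · rfl
    · rfl
    · rfl
    ext h
    rw [Tmap_apply]
    simp only [ContinuousLinearMap.add_apply, ContinuousLinearMap.coe_smul',
      ContinuousLinearMap.smulRight_apply, ContinuousLinearMap.coe_comp', Function.comp_apply,
      Pi.smul_apply, Pi.add_apply, Complex.ofRealCLM_apply, Complex.reCLM_apply, Complex.imCLM_apply,
      hℓap, ← hsz₀, ← huz₀, hrpow, hadef, hbdef, hGdef,
      smul_eq_mul, Complex.real_smul, ← Complex.ofReal_inv]
    apply Complex.ext <;>
      simp only [Complex.add_re, Complex.add_im, Complex.mul_re, Complex.mul_im,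
        Complex.ofReal_re, Complex.ofReal_im, Complex.I_re, Complex.I_im, Complex.conj_re,
        Complex.conj_im, Complex.sub_re, Complex.sub_im, Complex.neg_re, Complex.neg_im] <;>
      · field_simp
        ring
  -- f agrees with this function near z₀
  have heq : f =ᶠ[nhds z₀] (fun z : ℂ => Real.exp (α * (Complex.log (z * c)).re) •
      (((η₁ (θ + (Complex.log (z * c)).im) : ℝ) : ℂ) +
        ((η₂ (θ + (Complex.log (z * c)).im) : ℝ) : ℂ) * Complex.I)) := by
    filter_upwards [compl_singleton_mem_nhds hz₀] with z hz
    have hzne : z ≠ 0 := hz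
    have hzpos : 0 < ‖z‖ := norm_pos_iff.mpr hzne
    have habs : Real.exp (α * (Complex.log (z * c)).re) = ‖z‖ ^ α := by
      rw [Complex.log_re, norm_mul, habsc, mul_one, Real.rpow_def_of_pos hzpos, mul_comm]
    obtain ⟨n, hn⟩ : ∃ n : ℤ, θ + (Complex.log (z * c)).im = z.arg + n * (2 * Real.pi) := by
      have hzcne : z * c ≠ 0 := mul_ne_zero hzne (Complex.exp_ne_zero _)
      have e1 : ((‖z * c‖ : ℝ) : ℂ) * Complex.exp ((z * c).arg * Complex.I)
          = z * c := Complex.norm_mul_exp_arg_mul_I (z * c)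
      have e2 : ((‖z‖ : ℝ) : ℂ) * Complex.exp (z.arg * Complex.I) = z :=
        Complex.norm_mul_exp_arg_mul_I z
      have habs' : ‖z * c‖ = ‖z‖ := by rw [norm_mul, habsc, mul_one]
      have hzabs : ((‖z‖ : ℝ) : ℂ) ≠ 0 := by exact_mod_cast hzpos.ne'
      have hcinv : Complex.exp ((θ : ℂ) * Complex.I) * c = 1 := by
        rw [hcdef, ← Complex.exp_add]
        ring_nf
        exact Complex.exp_zero
      have h1 : Complex.exp ((↑(θ + (Complex.log (z * c)).im)) * Complex.I)
          = Complex.exp ((z.arg : ℂ) * Complex.I) := by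
        push_cast
        rw [add_mul, Complex.exp_add, Complex.log_im]
        have : ((‖z‖ : ℝ) : ℂ) *
            (Complex.exp ((θ : ℂ) * Complex.I) * Complex.exp (((z * c).arg : ℂ) * Complex.I))
            = ((‖z‖ : ℝ) : ℂ) * Complex.exp ((z.arg : ℂ) * Complex.I) := by
          rw [e2]
          calc ((‖z‖ : ℝ) : ℂ) *
              (Complex.exp ((θ : ℂ) * Complex.I) * Complex.exp (((z * c).arg : ℂ) * Complex.I))
              = Complex.exp ((θ : ℂ) * Complex.I) *
                (((‖z * c‖ : ℝ) : ℂ) * Complex.exp (((z * c).arg : ℂ) * Complex.I)) := by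
                rw [habs']; ring
            _ = Complex.exp ((θ : ℂ) * Complex.I) * (z * c) := by rw [e1]
            _ = z * (Complex.exp ((θ : ℂ) * Complex.I) * c) := by ring
            _ = z := by rw [hcinv, mul_one]
        exact mul_left_cancel₀ hzabs this
      obtain ⟨n, hn'⟩ := Complex.exp_eq_exp_iff_exists_int.mp h1
      refine ⟨n, ?_⟩
      have him := congrArg Complex.im hn'
      simpa [Complex.add_im, Complex.mul_im, Complex.mul_re] using him
    rw [hf z, habs, hn, (hη₁per.int_mul n) z.arg, (hη₂per.int_mul n) z.arg,
      Complex.real_smul]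
  have hfd : HasFDerivAt f (Tmap a b) z₀ := hDeq.congr_of_eventuallyEq heq
  refine ⟨hfd.differentiableAt, ?_⟩
  rw [hfd.fderiv, Tmap_det]
  have hGcn : ‖G * c‖ = ‖G‖ := by
    rw [norm_mul]; simp [habsc]
  have hGccn : ‖G * (starRingEnd ℂ) c‖ = ‖G‖ := by
    rw [norm_mul]; simp [habsc]
  set P : ℝ := α * r ^ α / (2 * r) * ‖G‖ with hPdef
  have hrp : (0:ℝ) < r ^ α := Real.rpow_pos_of_pos hr α
  have hna : ‖a‖ = P * (1 + K) := by
    rw [hadef, norm_smul, hGcn, Real.norm_eq_abs,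
      _root_.abs_of_nonneg (by positivity : (0:ℝ) ≤ α * r ^ α * (1 + K) / (2 * r)), hPdef]
    ring
  have hnb : ‖b‖ = P * (K - 1) := by
    rw [hbdef, norm_smul, hGccn, Real.norm_eq_abs,
      _root_.abs_of_nonpos (div_nonpos_iff.mpr (Or.inr ⟨by nlinarith [mul_pos hα hrp], by linarith⟩)), hPdef]
    ring
  have hP0 : 0 ≤ P := by positivity
  have hnorm : ‖Tmap a b‖ = 2 * P * K := by
    refine le_antisymm ?_ ?_
    · calc ‖Tmap a b‖ ≤ ‖a‖ + ‖b‖ := Tmap_norm_le a b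
        _ = 2 * P * K := by rw [hna, hnb]; ring
    · set h₀ : ℂ := Complex.I * z₀ / (r : ℂ) with hh₀
      have hh₀n : ‖h₀‖ = 1 := by
        rw [hh₀]
        simp only [norm_div, norm_mul, Complex.norm_I, one_mul,
          Complex.norm_real, Real.norm_eq_abs, _root_.abs_of_nonneg hr.le, ← hrdef]
        field_simp
      have hz₀cc : (starRingEnd ℂ) z₀ * (starRingEnd ℂ) c = (r : ℂ) := by
        rw [← map_mul, hz₀c, Complex.conj_ofReal]
      have hconjh₀ : (starRingEnd ℂ) h₀ = -Complex.I * (starRingEnd ℂ) z₀ / (r : ℂ) := by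
        rw [hh₀, map_div₀, map_mul, Complex.conj_I, Complex.conj_ofReal]
      have e1 : a * h₀ = ((α * r ^ α * (1 + K) / (2 * r) : ℝ)) • (G * Complex.I) := by
        rw [hadef, hh₀, Complex.real_smul, Complex.real_smul]
        calc ((α * r ^ α * (1 + K) / (2 * r) : ℝ) : ℂ) * (G * c) * (Complex.I * z₀ / (r : ℂ))
            = ((α * r ^ α * (1 + K) / (2 * r) : ℝ) : ℂ) * (G * Complex.I) * ((z₀ * c) / (r : ℂ)) := by
              ring
          _ = _ := by rw [hz₀c, div_self hrne, mul_one]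
      have e2 : b * ((starRingEnd ℂ) h₀)
          = -(((α * r ^ α * (1 - K) / (2 * r) : ℝ)) • (G * Complex.I)) := by
        rw [hbdef, hconjh₀, Complex.real_smul, Complex.real_smul]
        calc ((α * r ^ α * (1 - K) / (2 * r) : ℝ) : ℂ) * (G * (starRingEnd ℂ) c) *
              (-Complex.I * (starRingEnd ℂ) z₀ / (r : ℂ))
            = -(((α * r ^ α * (1 - K) / (2 * r) : ℝ) : ℂ) * (G * Complex.I) *
                (((starRingEnd ℂ) z₀ * (starRingEnd ℂ) c) / (r : ℂ))) := by ring
          _ = _ := by rw [hz₀cc, div_self hrne, mul_one]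
      have hTh₀ : Tmap a b h₀ = ((α * r ^ α * K / r : ℝ)) • (G * Complex.I) := by
        rw [Tmap_apply, e1, e2, ← sub_eq_add_neg, ← sub_smul]
        congr 1
        field_simp
        ring
      have hTn : ‖Tmap a b h₀‖ = 2 * P * K := by
        rw [hTh₀, norm_smul, Real.norm_eq_abs, norm_mul,
          _root_.abs_of_nonneg (by positivity : (0:ℝ) ≤ α * r ^ α * K / r)]
        simp only [Complex.norm_I, mul_one, hPdef]
        field_simp
      calc 2 * P * K = ‖Tmap a b h₀‖ := hTn.symm
        _ ≤ ‖Tmap a b‖ * ‖h₀‖ := (Tmap a b).le_opNorm h₀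
        _ = ‖Tmap a b‖ := by rw [hh₀n, mul_one]
  rw [hnorm, hna, hnb]
  ring
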